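/- arXiv:2012.07327 — 5 statements merged into one kernel-verified Lean document; each statement's English description precedes it below -/
import Mathlib

section
/- Let M be a metric space, F ⊆ M a closed set, and 𝒜 a family of subsets of M such that for every A ∈ 𝒜 the closure of A intersects F and (closure A) \ A ⊆ F. If for every ε > 0 the set {A ∈ 𝒜 : diam(A) ≥ ε} is finite, then the set F ∪ ⋃𝒜 is closed in M. -/
open Set
open scoped ENNReal

theorem stmt_2 {M : Type*} [MetricSpace M] (F : Set M) (hF : IsClosed F)
    (𝒜 : Set (Set M))
    (hmeet : ∀ A ∈ 𝒜, (closure A ∩ F).Nonempty)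
    (hbd : ∀ A ∈ 𝒜, closure A \ A ⊆ F)
    (hfin : ∀ ε : ℝ≥0∞, 0 < ε → {A ∈ 𝒜 | ε ≤ EMetric.diam A}.Finite) :
    IsClosed (F ∪ ⋃₀ 𝒜) := by
  rw [← closure_eq_iff_isClosed]
  refine Subset.antisymm ?_ subset_closure
  intro x hx
  by_cases hxF : x ∈ F
  · exact Or.inl hxF
  have he : 0 < EMetric.infEdist x F :=
    EMetric.infEdist_pos_iff_notMem_closure.2 (by rwa [hF.closure_eq])
  set e : ℝ≥0∞ := min (EMetric.infEdist x F) 1 with hedef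
  have he' : 0 < e := lt_min he one_pos
  have hene : e ≠ ⊤ := ne_top_of_le_ne_top ENNReal.one_ne_top (min_le_right _ _)
  set δ : ℝ≥0∞ := e / 2 with hδdef
  have hδ : 0 < δ := ENNReal.div_pos he'.ne' ENNReal.ofNat_ne_top
  set 𝒮 : Set (Set M) := {A ∈ 𝒜 | δ ≤ EMetric.diam A} with h𝒮
  have h𝒮fin : 𝒮.Finite := hfin δ hδ
  -- any A in 𝒜 meeting the δ-ball around x belongs to 𝒮
  have key : ∀ A ∈ 𝒜, (A ∩ EMetric.ball x δ).Nonempty → A ∈ 𝒮 := by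
    rintro A hA ⟨y, hyA, hyb⟩
    refine ⟨hA, ?_⟩
    obtain ⟨z, hzA, hzF⟩ := hmeet A hA
    have h1 : e ≤ edist x z := le_trans (min_le_left _ _)
      (EMetric.infEdist_le_edist_of_mem hzF)
    have h2 : edist x z ≤ edist x y + edist y z := edist_triangle _ _ _
    have hyz : δ ≤ edist y z := by
      by_contra hlt
      push_neg at hlt
      have : edist x z < δ + δ :=
        lt_of_le_of_lt h2 (ENNReal.add_lt_add (EMetric.mem_ball'.1 (EMetric.mem_ball.1 hyb)) hlt)
      rw [hδdef, ENNReal.add_halves] at this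
      exact absurd (lt_of_le_of_lt h1 this) (lt_irrefl _)
    calc δ ≤ edist y z := hyz
      _ ≤ EMetric.diam (closure A) :=
          EMetric.edist_le_diam_of_mem (subset_closure hyA) hzA
      _ = EMetric.diam A := EMetric.diam_closure A
  -- x is in the closure of ⋃₀ 𝒮
  have hx' : x ∈ closure (⋃₀ 𝒮) := by
    rw [EMetric.mem_closure_iff]
    intro r hr
    have hx2 : x ∈ closure (F ∪ ⋃₀ 𝒜) := hx
    rw [EMetric.mem_closure_iff] at hx2
    obtain ⟨y, hy, hyd⟩ := hx2 (min r δ) (lt_min hr hδ)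
    rcases hy with hyF | hyU
    · exfalso
      have h1 : EMetric.infEdist x F < δ :=
        lt_of_le_of_lt (EMetric.infEdist_le_edist_of_mem hyF)
          (lt_of_lt_of_le hyd (min_le_right _ _))
      exact absurd (lt_of_le_of_lt (min_le_left _ _) h1)
        (not_lt.2 ENNReal.half_le_self)
    · obtain ⟨A, hA, hyA⟩ := hyU
      refine ⟨y, ⟨A, key A hA ⟨y, hyA, EMetric.mem_ball'.2 ?_⟩, hyA⟩,
        lt_of_lt_of_le hyd (min_le_left _ _)⟩
      exact lt_of_lt_of_le hyd (min_le_right _ _)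
  rw [h𝒮fin.closure_sUnion] at hx'
  obtain ⟨A, hA𝒮, hxA⟩ := by simpa using hx'
  by_cases hxA' : x ∈ A
  · exact Or.inr ⟨A, hA𝒮.1, hxA'⟩
  · exact absurd (hbd A hA𝒮.1 ⟨hxA, hxA'⟩) hxF
end

section
/- Let X be a Polish space. Then the mapping from 𝒦(X) to 𝒦(X) given by K ↦ frontier(K) is Borel measurable. -/
open Set

/-- The hyperspace `𝒦(X)` of compact subsets of `X`. -/
def Hyper (X : Type*) [TopologicalSpace X] := {K : Set X // IsCompact K}

namespace Hyper
variable {X : Type*} [TopologicalSpace X]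

/-- The underlying set of a member of the hyperspace. -/
def carrier (K : Hyper X) : Set X := Subtype.val K

/-- The Vietoris topology on `𝒦(X)`. -/
instance : TopologicalSpace (Hyper X) :=
  TopologicalSpace.generateFrom
    ({S | ∃ U : Set X, IsOpen U ∧ S = {K : Hyper X | K.carrier ⊆ U}} ∪
     {S | ∃ U : Set X, IsOpen U ∧ S = {K : Hyper X | (K.carrier ∩ U).Nonempty}})

/-- The Borel σ-algebra of the Vietoris topology. -/
instance : MeasurableSpace (Hyper X) := borel _

end Hyper

namespace HF
open TopologicalSpace EMetric ENNReal Filter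

variable {X : Type*} [TopologicalSpace X]

/-- The defining subbasis of the Vietoris topology. -/
def Sub (X : Type*) [TopologicalSpace X] : Set (Set (Hyper X)) :=
  {S | ∃ U : Set X, IsOpen U ∧ S = {K : Hyper X | K.carrier ⊆ U}} ∪
  {S | ∃ U : Set X, IsOpen U ∧ S = {K : Hyper X | (K.carrier ∩ U).Nonempty}}

lemma topology_eq : (inferInstance : TopologicalSpace (Hyper X)) = generateFrom (Sub X) := rfl

instance : BorelSpace (Hyper X) := ⟨rfl⟩

lemma isOpen_subsetOpen {U : Set X} (hU : IsOpen U) :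
    IsOpen {K : Hyper X | K.carrier ⊆ U} :=
  TopologicalSpace.GenerateOpen.basic _ (Or.inl ⟨U, hU, rfl⟩)

lemma isClosed_hitClosed {F : Set X} (hF : IsClosed F) :
    IsClosed {K : Hyper X | (K.carrier ∩ F).Nonempty} := by
  have h : {K : Hyper X | (K.carrier ∩ F).Nonempty}ᶜ = {K : Hyper X | K.carrier ⊆ Fᶜ} := by
    ext K
    simp only [Set.mem_compl_iff, Set.mem_setOf_eq, Set.not_nonempty_iff_eq_empty,
      ← Set.disjoint_iff_inter_eq_empty, Set.subset_compl_iff_disjoint_right]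
  rw [← isOpen_compl_iff, h]
  exact isOpen_subsetOpen hF.isOpen_compl

lemma isClosed_memPoint [T1Space X] (x : X) :
    IsClosed {K : Hyper X | x ∈ K.carrier} := by
  have h : {K : Hyper X | x ∈ K.carrier}ᶜ = {K : Hyper X | K.carrier ⊆ {x}ᶜ} := by
    ext K; simp [Set.subset_compl_singleton_iff]
  rw [← isOpen_compl_iff, h]
  exact isOpen_subsetOpen isClosed_singleton.isOpen_compl

section SC
variable [SecondCountableTopology X]

/-- A countable subbasis of the Vietoris topology. -/
def Sub' (X : Type*) [TopologicalSpace X] [SecondCountableTopology X] : Set (Set (Hyper X)) :=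
  ((fun F : Set (Set X) => {K : Hyper X | K.carrier ⊆ ⋃₀ F}) ''
    {F | F.Finite ∧ F ⊆ countableBasis X}) ∪
  ((fun b : Set X => {K : Hyper X | (K.carrier ∩ b).Nonempty}) '' countableBasis X)

lemma countable_Sub' : (Sub' X).Countable :=
  ((Set.countable_setOf_finite_subset (countable_countableBasis X)).image _).union
    ((countable_countableBasis X).image _)

lemma topology_eq' : (inferInstance : TopologicalSpace (Hyper X)) = generateFrom (Sub' X) := by
  rw [topology_eq]
  apply le_antisymm
  · apply le_generateFrom
    rintro s (⟨F, ⟨hFfin, hFB⟩, rfl⟩ | ⟨b, hb, rfl⟩)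
    · exact .basic _ (Or.inl ⟨⋃₀ F, isOpen_sUnion fun t ht =>
        isOpen_of_mem_countableBasis (hFB ht), rfl⟩)
    · exact .basic _ (Or.inr ⟨b, isOpen_of_mem_countableBasis hb, rfl⟩)
  · apply le_generateFrom
    rintro s (⟨U, hU, rfl⟩ | ⟨U, hU, rfl⟩)
    · have h : {K : Hyper X | K.carrier ⊆ U} =
          ⋃₀ ((fun F : Set (Set X) => {K : Hyper X | K.carrier ⊆ ⋃₀ F}) ''
            {F | F.Finite ∧ F ⊆ countableBasis X ∧ ⋃₀ F ⊆ U}) := by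
        ext K
        simp only [mem_sUnion, mem_image, mem_setOf_eq]
        constructor
        · intro hKU
          obtain ⟨S, hSB, rfl⟩ := (isBasis_countableBasis X).open_eq_sUnion hU
          rw [sUnion_eq_iUnion] at hKU
          obtain ⟨t, ht⟩ := K.2.elim_finite_subcover (fun i : S => (i : Set X))
            (fun i => isOpen_of_mem_countableBasis (hSB i.2)) hKU
          refine ⟨_, ⟨(fun i : S => (i : Set X)) '' t, ⟨?_, ?_, ?_⟩, rfl⟩, ?_⟩
          · exact (t.finite_toSet.image _)
          · rintro _ ⟨i, _, rfl⟩; exact hSB i.2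
          · apply Set.sUnion_subset
            intro t' ht'
            obtain ⟨i, hi, heq⟩ := (Set.mem_image _ _ _).1 ht'
            rw [← heq]
            exact subset_sUnion_of_mem i.2
          · intro x hx
            obtain ⟨i, hit, hxi⟩ := Set.mem_iUnion₂.1 (ht hx)
            exact ⟨(i : Set X), Set.mem_image_of_mem _ hit, hxi⟩
        · rintro ⟨_, ⟨F, ⟨_, _, hFU⟩, rfl⟩, hK⟩
          exact Set.Subset.trans hK hFU
      rw [h]
      refine TopologicalSpace.GenerateOpen.sUnion _ ?_
      rintro t ⟨F, ⟨h1, h2, _⟩, rfl⟩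
      exact .basic _ (Or.inl ⟨F, ⟨h1, h2⟩, rfl⟩)
    · have h : {K : Hyper X | (K.carrier ∩ U).Nonempty} =
          ⋃₀ ((fun b : Set X => {K : Hyper X | (K.carrier ∩ b).Nonempty}) ''
            {b | b ∈ countableBasis X ∧ b ⊆ U}) := by
        ext K
        simp only [mem_sUnion, mem_image, mem_setOf_eq]
        constructor
        · rintro ⟨x, hxK, hxU⟩
          obtain ⟨b, hbB, hxb, hbU⟩ :=
            (isBasis_countableBasis X).exists_subset_of_mem_open hxU hU
          exact ⟨_, ⟨b, ⟨hbB, hbU⟩, rfl⟩, x, hxK, hxb⟩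
        · rintro ⟨_, ⟨b, ⟨_, hbU⟩, rfl⟩, x, hxK, hxb⟩
          exact ⟨x, hxK, hbU hxb⟩
      rw [h]
      refine TopologicalSpace.GenerateOpen.sUnion _ ?_
      rintro t ⟨b, ⟨h1, _⟩, rfl⟩
      exact .basic _ (Or.inr ⟨b, h1, rfl⟩)

instance : SecondCountableTopology (Hyper X) := by
  refine (isTopologicalBasis_of_subbasis (topology_eq' (X := X))).secondCountableTopology ?_
  exact (Set.countable_setOf_finite_subset countable_Sub').image _

end SC
end HF

namespace HF
section Metric
open TopologicalSpace EMetric ENNReal Filter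
variable {X : Type*} [MetricSpace X] [SecondCountableTopology X]

lemma exists_dense_subset (V : Set X) :
    ∃ c : Set X, c.Countable ∧ c ⊆ V ∧ V ⊆ closure c := by
  obtain ⟨D, Dcnt, Ddense⟩ := TopologicalSpace.exists_countable_dense V
  refine ⟨Subtype.val '' D, Dcnt.image _, ?_, ?_⟩
  · rintro _ ⟨d, _, rfl⟩; exact d.2
  · intro x hx
    have h1 : (⟨x, hx⟩ : V) ∈ closure D := Ddense _
    exact image_closure_subset_closure_image continuous_subtype_val ⟨_, h1, rfl⟩

lemma measurableSet_supset (V : Set X) : MeasurableSet {K : Hyper X | V ⊆ K.carrier} := by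
  obtain ⟨c, hcc, hcV, hVc⟩ := exists_dense_subset V
  have h : {K : Hyper X | V ⊆ K.carrier} = ⋂ x ∈ c, {K : Hyper X | x ∈ K.carrier} := by
    ext K
    simp only [mem_iInter, mem_setOf_eq]
    constructor
    · exact fun h x hx => h (hcV hx)
    · intro h
      have hcl : closure c ⊆ K.carrier :=
        K.2.isClosed.closure_subset_iff.2 fun x hx => h x hx
      exact hVc.trans hcl
  rw [h]
  exact MeasurableSet.biInter hcc fun x _ => (isClosed_memPoint x).measurableSet

lemma isOpen_eq_iUnion_closed {U : Set X} (hU : IsOpen U) :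
    ∃ F : ℕ → Set X, (∀ n, IsClosed (F n)) ∧ (⋃ n, F n) = U := by
  refine ⟨fun n => {x | ((n : ℝ≥0∞))⁻¹ ≤ infEdist x Uᶜ}, fun n =>
    IsClosed.preimage continuous_infEdist isClosed_Ici, ?_⟩
  apply Set.Subset.antisymm
  · rintro x ⟨_, ⟨n, rfl⟩, hx⟩
    have hpos : (0 : ℝ≥0∞) < infEdist x Uᶜ :=
      lt_of_lt_of_le (ENNReal.inv_pos.2 (by simp)) hx
    change (0 : ℝ≥0∞) < Metric.infEDist x Uᶜ at hpos
    rw [infEdist_pos_iff_notMem_closure] at hpos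
    by_contra hxU
    exact hpos (subset_closure hxU)
  · intro x hx
    have hpos : (0 : ℝ≥0∞) < infEdist x Uᶜ := by
      show (0 : ℝ≥0∞) < Metric.infEDist x Uᶜ
      rw [infEdist_pos_iff_notMem_closure, hU.isClosed_compl.closure_eq]
      simpa using hx
    obtain ⟨n, hn⟩ := ENNReal.exists_inv_nat_lt hpos.ne'
    exact Set.mem_iUnion.2 ⟨n, hn.le⟩

lemma measurableSet_hit_closed_inter_open {C b : Set X} (hC : IsClosed C) (hb : IsOpen b) :
    MeasurableSet {K : Hyper X | (K.carrier ∩ (C ∩ b)).Nonempty} := by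
  obtain ⟨F, hFc, hFU⟩ := isOpen_eq_iUnion_closed hb
  have h : {K : Hyper X | (K.carrier ∩ (C ∩ b)).Nonempty} =
      ⋃ n, {K : Hyper X | (K.carrier ∩ (C ∩ F n)).Nonempty} := by
    ext K
    simp only [Set.mem_iUnion, mem_setOf_eq]
    constructor
    · rintro ⟨x, hxK, hxC, hxb⟩
      rw [← hFU] at hxb
      obtain ⟨n, hn⟩ := Set.mem_iUnion.1 hxb
      exact ⟨n, x, hxK, hxC, hn⟩
    · rintro ⟨n, x, hxK, hxC, hxF⟩
      exact ⟨x, hxK, hxC, hFU ▸ (Set.mem_iUnion.2 ⟨n, hxF⟩ : x ∈ ⋃ n, F n)⟩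
  rw [h]
  exact MeasurableSet.iUnion fun n => (isClosed_hitClosed (hC.inter (hFc n))).measurableSet

/-- The basic "almost-boundary" sets. -/
def Afr (C : Set X) (ε : ℝ≥0∞) : Set (Hyper X) :=
  {K | ∃ x ∈ K.carrier ∩ C, infEdist x K.carrierᶜ < ε}

lemma measurableSet_Afr {C : Set X} (hC : IsClosed C) (ε : ℝ≥0∞) :
    MeasurableSet (Afr C ε) := by
  classical
  have hQc : {p : Set X × Set X | p.1 ∈ countableBasis X ∧ p.2 ∈ countableBasis X ∧
      ∀ u ∈ p.1, ∀ w ∈ p.2, edist u w < ε}.Countable :=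
    (((countable_countableBasis X).prod (countable_countableBasis X)).mono
      (fun p hp => Set.mem_prod.2 ⟨hp.1, hp.2.1⟩))
  have h : Afr C ε = ⋃ p ∈ {p : Set X × Set X | p.1 ∈ countableBasis X ∧
      p.2 ∈ countableBasis X ∧ ∀ u ∈ p.1, ∀ w ∈ p.2, edist u w < ε},
      ({K : Hyper X | (K.carrier ∩ (C ∩ p.1)).Nonempty} ∩
        {K : Hyper X | p.2 ⊆ K.carrier}ᶜ) := by
    ext K
    simp only [Set.mem_iUnion, Set.mem_inter_iff, Set.mem_compl_iff, mem_setOf_eq, Afr,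
      exists_prop]
    constructor
    · rintro ⟨x, ⟨hxK, hxC⟩, hlt⟩
      obtain ⟨y, hyKc, hxy⟩ := infEdist_lt_iff.1 hlt
      have hO : IsOpen {q : X × X | edist q.1 q.2 < ε} :=
        isOpen_lt continuous_edist continuous_const
      obtain ⟨u, v, hu, hv, hxu, hyv, huv⟩ := isOpen_prod_iff.1 hO x y hxy
      obtain ⟨b1, hb1B, hxb1, hb1u⟩ :=
        (isBasis_countableBasis X).exists_subset_of_mem_open hxu hu
      obtain ⟨b2, hb2B, hyb2, hb2v⟩ :=
        (isBasis_countableBasis X).exists_subset_of_mem_open hyv hv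
      refine ⟨(b1, b2), ⟨hb1B, hb2B, fun u' hu' w hw => ?_⟩, ⟨x, hxK, hxC, hxb1⟩, ?_⟩
      · exact huv (Set.mk_mem_prod (hb1u hu') (hb2v hw))
      · intro hsub
        exact hyKc (hsub hyb2)
    · rintro ⟨⟨b1, b2⟩, ⟨hp1, hp2, hpe⟩, ⟨x, hxK, hxC, hxp1⟩, hns⟩
      obtain ⟨y, hy2, hyK⟩ := Set.not_subset.1 hns
      exact ⟨x, ⟨hxK, hxC⟩,
        lt_of_le_of_lt (infEdist_le_edist_of_mem hyK) (hpe x hxp1 y hy2)⟩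
  rw [h]
  refine MeasurableSet.biUnion hQc fun p hp => ?_
  exact (measurableSet_hit_closed_inter_open hC (isOpen_of_mem_countableBasis hp.1)).inter
    (measurableSet_supset p.2).compl

lemma frontier_hit_closed_eq {C : Set X} (hC : IsClosed C) :
    {K : Hyper X | (frontier K.carrier ∩ C).Nonempty} =
      ⋂ m : ℕ, Afr C ((m : ℝ≥0∞) + 1)⁻¹ := by
  ext K
  simp only [Set.mem_iInter, mem_setOf_eq]
  constructor
  · rintro ⟨x, hxf, hxC⟩ m
    have hxK : x ∈ K.carrier :=
      K.2.isClosed.closure_subset (frontier_subset_closure hxf)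
    have hx0 : infEdist x K.carrierᶜ = 0 := by
      show Metric.infEDist x K.carrierᶜ = 0
      rw [← mem_closure_iff_infEdist_zero, closure_compl]
      exact fun h => hxf.2 h
    exact ⟨x, ⟨hxK, hxC⟩, by
      rw [hx0]; exact ENNReal.inv_pos.2 (by simp)⟩
  · intro h
    choose x hx hlt using h
    obtain ⟨a, haK, φ, hφ, hconv⟩ := K.2.tendsto_subseq (fun m => (hx m).1)
    have haC : a ∈ C :=
      hC.mem_of_tendsto hconv (Filter.Eventually.of_forall fun m => (hx (φ m)).2)
    have hcl : a ∈ closure K.carrierᶜ := by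
      rw [EMetric.mem_closure_iff]
      intro δ hδ
      have hδ2 : (0 : ℝ≥0∞) < δ / 2 := ENNReal.half_pos hδ.ne'
      obtain ⟨n, hn⟩ := ENNReal.exists_inv_nat_lt hδ2.ne'
      obtain ⟨N, hN⟩ := (EMetric.tendsto_atTop).1 hconv (δ / 2) hδ2
      set m := max n N with hm
      have hm1 : edist (x (φ m)) a < δ / 2 := hN m (le_max_right _ _)
      have hm2 : infEdist (x (φ m)) K.carrierᶜ < δ / 2 := by
        refine lt_of_lt_of_le (hlt (φ m)) (le_trans ?_ hn.le)
        rw [ENNReal.inv_le_inv]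
        have : (n : ℝ≥0∞) ≤ (m : ℝ≥0∞) := by exact_mod_cast le_max_left n N
        refine this.trans ?_
        have h2 : (m : ℝ≥0∞) ≤ (φ m : ℝ≥0∞) := by exact_mod_cast hφ.le_apply
        exact h2.trans le_self_add
      obtain ⟨y, hyKc, hy⟩ := infEdist_lt_iff.1 hm2
      refine ⟨y, hyKc, ?_⟩
      calc edist a y ≤ edist a (x (φ m)) + edist (x (φ m)) y := edist_triangle _ _ _
        _ < δ / 2 + δ / 2 := by
            exact ENNReal.add_lt_add (by rwa [edist_comm] at hm1) hy
        _ = δ := ENNReal.add_halves δ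
    refine ⟨a, ?_, haC⟩
    rw [frontier_eq_closure_inter_closure]
    exact ⟨subset_closure haK, hcl⟩

lemma measurableSet_frontier_hit_closed {C : Set X} (hC : IsClosed C) :
    MeasurableSet {K : Hyper X | (frontier K.carrier ∩ C).Nonempty} := by
  rw [frontier_hit_closed_eq hC]
  exact MeasurableSet.iInter fun m => measurableSet_Afr hC _

lemma measurableSet_frontier_hit_open {U : Set X} (hU : IsOpen U) :
    MeasurableSet {K : Hyper X | (frontier K.carrier ∩ U).Nonempty} := by
  obtain ⟨F, hFc, hFU⟩ := isOpen_eq_iUnion_closed hU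
  have h : {K : Hyper X | (frontier K.carrier ∩ U).Nonempty} =
      ⋃ n, {K : Hyper X | (frontier K.carrier ∩ F n).Nonempty} := by
    ext K
    simp only [Set.mem_iUnion, mem_setOf_eq]
    constructor
    · rintro ⟨x, hxf, hxU⟩
      rw [← hFU] at hxU
      obtain ⟨n, hn⟩ := Set.mem_iUnion.1 hxU
      exact ⟨n, x, hxf, hn⟩
    · rintro ⟨n, x, hxf, hxF⟩
      exact ⟨x, hxf, hFU ▸ (Set.mem_iUnion.2 ⟨n, hxF⟩ : x ∈ ⋃ n, F n)⟩
  rw [h]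
  exact MeasurableSet.iUnion fun n => measurableSet_frontier_hit_closed (hFc n)

lemma measurableSet_frontier_subset_open {U : Set X} (hU : IsOpen U) :
    MeasurableSet {K : Hyper X | frontier K.carrier ⊆ U} := by
  have h : {K : Hyper X | frontier K.carrier ⊆ U} =
      {K : Hyper X | (frontier K.carrier ∩ Uᶜ).Nonempty}ᶜ := by
    ext K
    simp only [Set.mem_compl_iff, mem_setOf_eq, Set.not_nonempty_iff_eq_empty,
      ← Set.disjoint_iff_inter_eq_empty, ← Set.subset_compl_iff_disjoint_right, compl_compl]
  rw [h]
  exact (measurableSet_frontier_hit_closed hU.isClosed_compl).compl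

end Metric
end HF

theorem stmt_6 (X : Type*) [TopologicalSpace X] [PolishSpace X] :
    ∃ Φ : Hyper X → Hyper X,
      (∀ K : Hyper X, (Φ K).carrier = frontier K.carrier) ∧ Measurable Φ := by
  letI := TopologicalSpace.upgradeIsCompletelyMetrizable X
  have hcomp : ∀ K : Hyper X, IsCompact (frontier K.carrier) := fun K =>
    K.2.of_isClosed_subset isClosed_frontier
      (fun x hx => K.2.isClosed.closure_subset (frontier_subset_closure hx))
  refine ⟨fun K => ⟨frontier K.carrier, hcomp K⟩, fun K => rfl, ?_⟩
  have hgen : (inferInstance : MeasurableSpace (Hyper X)) =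
      MeasurableSpace.generateFrom (HF.Sub X) :=
    borel_eq_generateFrom_of_subbasis HF.topology_eq
  have key : ∀ s ∈ HF.Sub X, MeasurableSet
      ((fun K : Hyper X => (⟨frontier K.carrier, hcomp K⟩ : Hyper X)) ⁻¹' s) := by
    rintro s (⟨U, hU, rfl⟩ | ⟨U, hU, rfl⟩)
    · exact HF.measurableSet_frontier_subset_open hU
    · exact HF.measurableSet_frontier_hit_open hU
  have hm := measurable_generateFrom key
  rw [← hgen] at hm
  exact hm
end

section
/- Let n ∈ ℕ, let G ⊆ ℝⁿ be a nonempty open set, and let D₁, D₂ be countable dense subsets of G. Then there exists a homeomorphism h : ℝⁿ → ℝⁿ of ℝⁿ onto itself such that h(D₁) = D₂ and h(x) = x for every x ∈ ℝⁿ \ G. -/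
open Set Metric

variable {E : Type*} [NormedAddCommGroup E] [NormedSpace ℝ E] [CompleteSpace E]

/-- Moving homeomorphism: moves `a` to `b` inside `ball a r`, identity outside. -/
theorem exists_move [Nontrivial E] (a b : E) (r : ℝ) (hr : 0 < r) (hb : dist b a < r) :
    ∃ h : E ≃ₜ E, h a = b ∧ (∀ x, x ∉ ball a r → h x = x) ∧
      (∀ x, x ∉ ball a r → h.symm x = x) ∧
      (∀ x, dist (h x) x ≤ dist b a) ∧ (∀ y, dist (h.symm y) y ≤ dist b a) ∧
      UniformContinuous h ∧ UniformContinuous h.symm := by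
  set v := b - a with hv
  have hvn : ‖v‖ < r := by rwa [hv, ← dist_eq_norm]
  have hvnn : 0 ≤ ‖v‖ := norm_nonneg _
  set φ : E → ℝ := fun x => max (1 - ‖x - a‖ / r) 0 with hφ
  have hφ0 : ∀ x, 0 ≤ φ x := fun x => le_max_right _ _
  have hφ1 : ∀ x, φ x ≤ 1 := by
    intro x
    refine max_le ?_ zero_le_one
    have : 0 ≤ ‖x - a‖ / r := div_nonneg (norm_nonneg _) hr.le
    linarith
  have hφa : φ a = 1 := by simp [hφ]
  have hφout : ∀ x, x ∉ ball a r → φ x = 0 := by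
    intro x hx
    have h1 : r ≤ dist x a := not_lt.1 (by simpa [Metric.mem_ball] using hx)
    have h2 : r ≤ ‖x - a‖ := by rwa [← dist_eq_norm]
    have : (1:ℝ) ≤ ‖x - a‖ / r := (one_le_div hr).2 h2
    simp [hφ, max_eq_right, sub_nonpos.2 this]
  have hφlip : ∀ x y, |φ x - φ y| ≤ ‖x - y‖ / r := by
    intro x y
    have h1 : |(1 - ‖x - a‖ / r) - (1 - ‖y - a‖ / r)| ≤ ‖x - y‖ / r := by
      have : (1 - ‖x - a‖ / r) - (1 - ‖y - a‖ / r) = (‖y - a‖ - ‖x - a‖) / r := by ring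
      rw [this, abs_div, abs_of_pos hr]
      gcongr
      have := abs_norm_sub_norm_le (y - a) (x - a)
      simpa [norm_sub_rev, show y - a - (x - a) = y - x by abel] using this
    calc |φ x - φ y| ≤ |(1 - ‖x - a‖ / r) - (1 - ‖y - a‖ / r)| :=
          abs_max_sub_max_le_abs _ _ _
      _ ≤ ‖x - y‖ / r := h1
  set f : E → E := fun x => x + φ x • v with hf
  have hfa : f a = b := by simp [hf, hφa, hv]
  have hfout : ∀ x, x ∉ ball a r → f x = x := by
    intro x hx; simp [hf, hφout x hx]
  have hfdist : ∀ x, dist (f x) x ≤ dist b a := by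
    intro x
    have : dist (f x) x = φ x * ‖v‖ := by
      simp [hf, dist_eq_norm, norm_smul, abs_of_nonneg (hφ0 x)]
    rw [this, dist_eq_norm, ← hv]
    calc φ x * ‖v‖ ≤ 1 * ‖v‖ := by gcongr; exact hφ1 x
      _ = ‖v‖ := one_mul _
  -- approximates linear on
  set c : NNReal := ⟨‖v‖ / r, div_nonneg hvnn hr.le⟩ with hc
  have happrox : ApproximatesLinearOn f
      ((ContinuousLinearEquiv.refl ℝ E : E ≃L[ℝ] E) : E →L[ℝ] E) univ c := by
    intro x _ y _
    have : f x - f y - ((ContinuousLinearEquiv.refl ℝ E : E ≃L[ℝ] E) : E →L[ℝ] E) (x - y)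
        = (φ x - φ y) • v := by
      simp only [hf, ContinuousLinearEquiv.coe_coe, ContinuousLinearEquiv.refl_apply, sub_smul]
      abel
    rw [this, norm_smul]
    have := hφlip x y
    calc |φ x - φ y| * ‖v‖ ≤ (‖x - y‖ / r) * ‖v‖ := by gcongr
      _ = (‖v‖ / r) * ‖x - y‖ := by ring
      _ = (c : ℝ) * ‖x - y‖ := rfl
  have hclt : (c : ℝ) < 1 := by
    rw [hc]; exact (div_lt_one hr).2 hvn
  have hcN : Subsingleton E ∨ c <
      (‖(((ContinuousLinearEquiv.refl ℝ E : E ≃L[ℝ] E).symm :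
        E ≃L[ℝ] E) : E →L[ℝ] E)‖₊)⁻¹ := by
    right
    have : (((ContinuousLinearEquiv.refl ℝ E : E ≃L[ℝ] E).symm : E ≃L[ℝ] E) : E →L[ℝ] E)
        = ContinuousLinearMap.id ℝ E := rfl
    rw [this]
    have hid : ‖(ContinuousLinearMap.id ℝ E)‖₊ = 1 := by
      ext
      simpa using ContinuousLinearMap.norm_id (𝕜 := ℝ) (E := E)
    rw [hid, inv_one]
    exact_mod_cast hclt
  set h : E ≃ₜ E := happrox.toHomeomorph f hcN with hh
  have hco : (h : E → E) = f := rfl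
  -- f maps the ball into the ball
  have hballmap : ∀ x, x ∈ ball a r → f x ∈ ball a r := by
    intro x hx
    have ht : ‖x - a‖ < r := by rwa [Metric.mem_ball, dist_eq_norm] at hx
    have htn : 0 ≤ ‖x - a‖ := norm_nonneg _
    have hφx : φ x ≤ 1 - ‖x - a‖ / r := by
      have hpos : 0 ≤ 1 - ‖x - a‖ / r := by
        have : ‖x - a‖ / r < 1 := (div_lt_one hr).2 ht
        linarith
      simp [hφ, max_le_iff, hpos]
    have hnorm : ‖f x - a‖ ≤ ‖x - a‖ + φ x * ‖v‖ := by
      have : f x - a = (x - a) + φ x • v := by simp [hf]; abel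
      rw [this]
      refine (norm_add_le _ _).trans ?_
      rw [norm_smul, Real.norm_eq_abs, abs_of_nonneg (hφ0 x)]
    have hlt : ‖x - a‖ + φ x * ‖v‖ < r := by
      have h2 : φ x * ‖v‖ ≤ (1 - ‖x - a‖ / r) * ‖v‖ := by
        apply mul_le_mul_of_nonneg_right hφx hvnn
      have h3 : ‖x - a‖ + (1 - ‖x - a‖ / r) * ‖v‖ < r := by
        rw [div_eq_mul_inv]
        have hr' : 0 < r⁻¹ := inv_pos.2 hr
        have key : (r - ‖x - a‖) * (r - ‖v‖) > 0 :=
          mul_pos (by linarith) (by linarith)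
        have hrne : r ≠ 0 := ne_of_gt hr
        rw [show ‖x - a‖ + (1 - ‖x - a‖ * r⁻¹) * ‖v‖
            = ‖x - a‖ + ‖v‖ - (‖x - a‖ * ‖v‖) * r⁻¹ by ring]
        rw [sub_lt_iff_lt_add, ← sub_lt_iff_lt_add']
        calc ‖x - a‖ + ‖v‖ - r = (r * (‖x - a‖ + ‖v‖) - r * r) * r⁻¹ := by
              field_simp
            _ < (‖x - a‖ * ‖v‖) * r⁻¹ := by
              apply mul_lt_mul_of_pos_right _ hr'
              nlinarith [key]
      linarith
    rw [Metric.mem_ball, dist_eq_norm]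
    exact lt_of_le_of_lt hnorm hlt
  have hsymmout : ∀ x, x ∉ ball a r → h.symm x = x := by
    intro x hx
    by_cases hy : h.symm x ∈ ball a r
    · exfalso
      have : h (h.symm x) ∈ ball a r := by rw [hco]; exact hballmap _ hy
      rw [Homeomorph.apply_symm_apply] at this
      exact hx this
    · have : h (h.symm x) = h.symm x := by rw [hco]; exact hfout _ hy
      rw [Homeomorph.apply_symm_apply] at this
      exact this.symm
  have hsymmdist : ∀ y, dist (h.symm y) y ≤ dist b a := by
    intro y
    have : dist (h (h.symm y)) (h.symm y) ≤ dist b a := by rw [hco]; exact hfdist _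
    rwa [Homeomorph.apply_symm_apply, dist_comm] at this
  -- Lipschitz bounds
  have hlipf : LipschitzWith (1 + c) (h : E → E) := by
    rw [lipschitzWith_iff_dist_le_mul]
    intro x y
    rw [hco]
    have : f x - f y = (x - y) + (φ x - φ y) • v := by simp [hf, sub_smul]; abel
    rw [dist_eq_norm, this]
    calc ‖(x - y) + (φ x - φ y) • v‖ ≤ ‖x - y‖ + |φ x - φ y| * ‖v‖ := by
          refine (norm_add_le _ _).trans ?_
          rw [norm_smul, Real.norm_eq_abs]
      _ ≤ ‖x - y‖ + (‖x - y‖ / r) * ‖v‖ := by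
          gcongr
          exact hφlip x y
      _ = (1 + ‖v‖ / r) * ‖x - y‖ := by ring
      _ = ((1 + c : NNReal) : ℝ) * dist x y := by
          rw [dist_eq_norm]; push_cast; rfl
  have hantilip : ∀ x y : E, (1 - (c:ℝ)) * ‖x - y‖ ≤ ‖f x - f y‖ := by
    intro x y
    have happ := happrox x (mem_univ x) y (mem_univ y)
    simp only [ContinuousLinearEquiv.coe_coe, ContinuousLinearEquiv.refl_apply] at happ
    have h1 : ‖x - y‖ ≤ ‖f x - f y‖ + ‖f x - f y - (x - y)‖ := by
      calc ‖x - y‖ = ‖(f x - f y) - (f x - f y - (x - y))‖ := by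
            rw [show (f x - f y) - (f x - f y - (x - y)) = x - y by abel]
        _ ≤ ‖f x - f y‖ + ‖f x - f y - (x - y)‖ := norm_sub_le _ _
    nlinarith [happ, h1, norm_nonneg (x - y), norm_nonneg (f x - f y)]
  have hlipsymm : LipschitzWith (Real.toNNReal ((1 - (c:ℝ))⁻¹)) (h.symm : E → E) := by
    rw [lipschitzWith_iff_dist_le_mul]
    intro p q
    have hc1 : 0 < 1 - (c:ℝ) := by linarith
    have := hantilip (h.symm p) (h.symm q)
    have hfp : f (h.symm p) = p := by rw [← hco, Homeomorph.apply_symm_apply]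
    have hfq : f (h.symm q) = q := by rw [← hco, Homeomorph.apply_symm_apply]
    rw [hfp, hfq] at this
    rw [dist_eq_norm, dist_eq_norm, Real.coe_toNNReal _ (le_of_lt (inv_pos.2 hc1))]
    rw [inv_mul_eq_div, le_div_iff₀ hc1, mul_comm]
    exact this
  exact ⟨h, by rw [hco]; exact hfa, fun x hx => by rw [hco]; exact hfout x hx,
    hsymmout, fun x => by rw [hco]; exact hfdist x, hsymmdist,
    hlipf.uniformContinuous, hlipsymm.uniformContinuous⟩

/-- Invariant for the back-and-forth construction. -/
def Good (G D₁ D₂ : Set E) (H : E ≃ₜ E) (A : Set E) : Prop :=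
  (∀ x ∉ G, H x = x) ∧ A ⊆ D₁ ∧ (H : E → E) '' A ⊆ D₂ ∧ A.Finite ∧
    UniformContinuous (H : E → E) ∧ UniformContinuous (H.symm : E → E)

theorem Good.symm_idOut {G D₁ D₂ : Set E} {H : E ≃ₜ E} {A : Set E}
    (good : Good G D₁ D₂ H A) : ∀ x ∉ G, H.symm x = x := by
  intro x hx
  have h1 : H x = x := good.1 x hx
  have : H (H.symm x) = H x := by rw [Homeomorph.apply_symm_apply, h1]
  exact H.injective this

theorem Good.mapsG {G D₁ D₂ : Set E} {H : E ≃ₜ E} {A : Set E}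
    (good : Good G D₁ D₂ H A) : ∀ x ∈ G, H x ∈ G := by
  intro x hx
  by_contra hHx
  have : H (H x) = H x := good.1 (H x) hHx
  have := H.injective this
  rw [this] at hHx
  exact hHx hx

theorem Good.symm {G D₁ D₂ : Set E} {H : E ≃ₜ E} {A : Set E}
    (good : Good G D₁ D₂ H A) : Good G D₂ D₁ H.symm ((H : E → E) '' A) := by
  obtain ⟨idOut, hA1, hA2, hAfin, hUC, hUCs⟩ := good
  refine ⟨fun x hx => Good.symm_idOut ⟨idOut, hA1, hA2, hAfin, hUC, hUCs⟩ x hx, hA2, ?_, hAfin.image _, hUCs, by simpa using hUC⟩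
  intro y hy
  obtain ⟨z, ⟨w, hw, rfl⟩, rfl⟩ := hy
  simpa using hA1 hw

/-- Forward step: extend the partial matching to include `p ∈ D₁`. -/
theorem step_forward [Nontrivial E] {G Ds Dt : Set E} (hGopen : IsOpen G)
    (hDssub : Ds ⊆ G) (hDtdense : G ⊆ closure Dt)
    {H : E ≃ₜ E} {A : Set E} (good : Good G Ds Dt H A)
    {p : E} (hp : p ∈ Ds) {ε : ℝ} (hε : 0 < ε) :
    ∃ (H' : E ≃ₜ E) (A' : Set E), Good G Ds Dt H' A' ∧ A ⊆ A' ∧ p ∈ A' ∧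
      (∀ x ∈ A, H' x = H x) ∧ (∀ x, dist (H' x) (H x) ≤ ε) ∧
      (∀ y, dist (H'.symm y) (H.symm y) ≤ ε) := by
  obtain ⟨idOut, hA1, hA2, hAfin, hUC, hUCs⟩ := good
  by_cases hpA : p ∈ A
  · exact ⟨H, A, ⟨idOut, hA1, hA2, hAfin, hUC, hUCs⟩, subset_rfl, hpA, fun _ _ => rfl,
      fun x => by simp [hε.le], fun y => by simp [hε.le]⟩
  set q : E := H p with hq
  have hqG : q ∈ G := Good.mapsG ⟨idOut, hA1, hA2, hAfin, hUC, hUCs⟩ p (hDssub hp)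
  set F : Set E := (H : E → E) '' A with hF
  have hFfin : F.Finite := hAfin.image _
  have hqF : q ∉ F := by
    rintro ⟨a, ha, hqa⟩
    exact hpA (by rwa [← H.injective hqa])
  -- modulus of uniform continuity for H.symm
  obtain ⟨δ, hδ0, hδ⟩ := Metric.uniformContinuous_iff.1 hUCs ε hε
  -- choose a radius
  have hopen : IsOpen (G ∩ Fᶜ) := hGopen.inter hFfin.isClosed.isOpen_compl
  have hqmem : q ∈ G ∩ Fᶜ := ⟨hqG, hqF⟩
  obtain ⟨r₀, hr₀, hball₀⟩ := Metric.isOpen_iff.1 hopen q hqmem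
  set r : ℝ := min r₀ (min ε δ) with hrdef
  have hr : 0 < r := lt_min hr₀ (lt_min hε hδ0)
  have hrε : r ≤ ε := (min_le_right _ _).trans (min_le_left _ _)
  have hrδ : r ≤ δ := (min_le_right _ _).trans (min_le_right _ _)
  have hball : Metric.ball q r ⊆ G ∩ Fᶜ := fun x hx => hball₀ (Metric.ball_subset_ball (min_le_left _ _) hx)
  -- pick q' ∈ Dt inside the ball, off F
  have hFdense : Dense Fᶜ := (hFfin.countable).dense_compl ℝ
  obtain ⟨z, hz1, hz2⟩ := hFdense.inter_open_nonempty _ Metric.isOpen_ball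
    ⟨q, Metric.mem_ball_self hr⟩
  have hzG : z ∈ G := (hball hz1).1
  obtain ⟨q', hq'mem, hq'Dt⟩ := _root_.mem_closure_iff.1 (hDtdense hzG) _
    (Metric.isOpen_ball.inter hFfin.isClosed.isOpen_compl) ⟨hz1, hz2⟩
  obtain ⟨hq'ball, hq'F⟩ := hq'mem
  -- the moving homeomorphism
  obtain ⟨g, hga, hgout, hgsymmout, hgdist, hgsymmdist, hgUC, hgsUC⟩ :=
    exists_move q q' r hr (by rwa [← Metric.mem_ball])
  set H' : E ≃ₜ E := H.trans g with hH'
  have hH'coe : ∀ x, H' x = g (H x) := fun _ => rfl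
  have hH'symm : ∀ y, H'.symm y = H.symm (g.symm y) := fun _ => rfl
  have hAfix : ∀ x ∈ A, H' x = H x := by
    intro x hx
    rw [hH'coe]
    apply hgout
    intro hmem
    exact (hball hmem).2 ⟨x, hx, rfl⟩
  have hdistq : dist q' q ≤ r := le_of_lt (by rwa [← Metric.mem_ball])
  refine ⟨H', insert p A, ⟨?_, ?_, ?_, hAfin.insert p, ?_, ?_⟩, subset_insert _ _,
    mem_insert _ _, hAfix, ?_, ?_⟩
  · intro x hx
    rw [hH'coe, idOut x hx]
    apply hgout
    intro hmem
    exact hx (hball hmem).1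
  · exact insert_subset hp hA1
  · rintro y ⟨x, hx, rfl⟩
    rcases hx with rfl | hx
    · rw [hH'coe, ← hq, hga]; exact hq'Dt
    · rw [hAfix x hx]; exact hA2 ⟨x, hx, rfl⟩
  · exact hgUC.comp hUC
  · exact hUCs.comp hgsUC
  · intro x
    rw [hH'coe]
    exact (hgdist (H x)).trans (hdistq.trans hrε)
  · intro y
    rw [hH'symm]
    have hq'lt : dist q' q < r := by rwa [← Metric.mem_ball]
    have hlt : dist (g.symm y) y < δ := (hgsymmdist y).trans_lt (hq'lt.trans_le hrδ)
    exact le_of_lt (hδ hlt)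

/-- Backward step: extend so that `q ∈ Dt` is in the image of the matching. -/
theorem step_backward [Nontrivial E] {G Ds Dt : Set E} (hGopen : IsOpen G)
    (hDtsub : Dt ⊆ G) (hDsdense : G ⊆ closure Ds)
    {H : E ≃ₜ E} {A : Set E} (good : Good G Ds Dt H A)
    {q : E} (hq : q ∈ Dt) {ε : ℝ} (hε : 0 < ε) :
    ∃ (H' : E ≃ₜ E) (A' : Set E), Good G Ds Dt H' A' ∧ A ⊆ A' ∧
      q ∈ (H' : E → E) '' A' ∧
      (∀ x ∈ A, H' x = H x) ∧ (∀ x, dist (H' x) (H x) ≤ ε) ∧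
      (∀ y, dist (H'.symm y) (H.symm y) ≤ ε) := by
  obtain ⟨K', B', goodK, hBsub, hqB, hfix, hd1, hd2⟩ :=
    step_forward hGopen hDtsub hDsdense good.symm hq hε
  have hKA : ∀ x ∈ A, K' (H x) = x := by
    intro x hx
    rw [hfix (H x) ⟨x, hx, rfl⟩, Homeomorph.symm_apply_apply]
  refine ⟨K'.symm, (K' : E → E) '' B', ?_, ?_, ?_, ?_, ?_, ?_⟩
  · have := goodK.symm
    simpa using this
  · intro x hx
    exact ⟨H x, hBsub ⟨x, hx, rfl⟩, hKA x hx⟩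
  · exact ⟨K' q, ⟨q, hqB, rfl⟩, by simp⟩
  · intro x hx
    have : K' (H x) = x := hKA x hx
    calc K'.symm x = K'.symm (K' (H x)) := by rw [this]
      _ = H x := K'.symm_apply_apply _
  · intro x
    simpa using hd2 x
  · intro y
    simpa using hd1 y

/-- Dependent choice along ℕ. -/
theorem nat_choice {α : Sort*} (P : ℕ → α → α → Prop) (a₀ : α) (h : ∀ n a, ∃ b, P n a b) :
    ∃ f : ℕ → α, f 0 = a₀ ∧ ∀ n, P n (f n) (f (n + 1)) := by
  let f : ℕ → α := fun n => Nat.rec a₀ (fun k a => (h k a).choose) n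
  exact ⟨f, rfl, fun n => (h n (f n)).choose_spec⟩

theorem step_combined [Nontrivial E] {G D₁ D₂ : Set E} (hGopen : IsOpen G)
    (hD₁sub : D₁ ⊆ G) (hD₂sub : D₂ ⊆ G)
    (hD₁dense : G ⊆ closure D₁) (hD₂dense : G ⊆ closure D₂)
    (e₁ e₂ : ℕ → E) (he₁ : ∀ i, e₁ i ∈ D₁) (he₂ : ∀ i, e₂ i ∈ D₂)
    (k : ℕ) (s : {p : (E ≃ₜ E) × Set E // Good G D₁ D₂ p.1 p.2}) :
    ∃ s' : {p : (E ≃ₜ E) × Set E // Good G D₁ D₂ p.1 p.2},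
      s.1.2 ⊆ s'.1.2 ∧ (∀ x ∈ s.1.2, s'.1.1 x = s.1.1 x) ∧
      (∀ x, dist (s'.1.1 x) (s.1.1 x) ≤ 1 / 2 ^ k) ∧
      (∀ y, dist (s'.1.1.symm y) (s.1.1.symm y) ≤ 1 / 2 ^ k) ∧
      (Even k → e₁ (k / 2) ∈ s'.1.2) ∧
      (¬Even k → e₂ (k / 2) ∈ (s'.1.1 : E → E) '' s'.1.2) := by
  have hε : (0:ℝ) < 1 / 2 ^ k := by positivity
  by_cases hk : Even k
  · obtain ⟨H', A', good', hsub, hmem, hfix, hd1, hd2⟩ :=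
      step_forward hGopen hD₁sub hD₂dense s.2 (he₁ (k / 2)) hε
    exact ⟨⟨(H', A'), good'⟩, hsub, hfix, hd1, hd2, fun _ => hmem, fun h => absurd hk h⟩
  · obtain ⟨H', A', good', hsub, hmem, hfix, hd1, hd2⟩ :=
      step_backward hGopen hD₂sub hD₁dense s.2 (he₂ (k / 2)) hε
    exact ⟨⟨(H', A'), good'⟩, hsub, hfix, hd1, hd2, fun h => absurd h hk, fun _ => hmem⟩

theorem main_nontrivial [Nontrivial E] {G D₁ D₂ : Set E}
    (hGopen : IsOpen G) (hGne : G.Nonempty)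
    (hD₁ctble : D₁.Countable) (hD₂ctble : D₂.Countable)
    (hD₁sub : D₁ ⊆ G) (hD₂sub : D₂ ⊆ G)
    (hD₁dense : G ⊆ closure D₁) (hD₂dense : G ⊆ closure D₂) :
    ∃ h : E ≃ₜ E, (h : E → E) '' D₁ = D₂ ∧ ∀ x ∉ G, h x = x := by
  classical
  -- D₁ and D₂ are nonempty
  obtain ⟨x₀, hx₀⟩ := hGne
  have hD₁ne : D₁.Nonempty := by
    by_contra hne
    rw [not_nonempty_iff_eq_empty] at hne
    have := hD₁dense hx₀
    rw [hne, closure_empty] at this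
    exact this
  have hD₂ne : D₂.Nonempty := by
    by_contra hne
    rw [not_nonempty_iff_eq_empty] at hne
    have := hD₂dense hx₀
    rw [hne, closure_empty] at this
    exact this
  obtain ⟨e₁, he₁r⟩ := hD₁ctble.exists_eq_range hD₁ne
  obtain ⟨e₂, he₂r⟩ := hD₂ctble.exists_eq_range hD₂ne
  have he₁ : ∀ i, e₁ i ∈ D₁ := fun i => he₁r ▸ mem_range_self i
  have he₂ : ∀ i, e₂ i ∈ D₂ := fun i => he₂r ▸ mem_range_self i
  -- build the sequence
  have good₀ : Good G D₁ D₂ (Homeomorph.refl E) (∅ : Set E) :=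
    ⟨fun _ _ => rfl, empty_subset _, by simp, finite_empty,
      uniformContinuous_id, uniformContinuous_id⟩
  obtain ⟨f, hf0, hfP⟩ := nat_choice
    (fun k (s s' : {p : (E ≃ₜ E) × Set E // Good G D₁ D₂ p.1 p.2}) =>
      s.1.2 ⊆ s'.1.2 ∧ (∀ x ∈ s.1.2, s'.1.1 x = s.1.1 x) ∧
      (∀ x, dist (s'.1.1 x) (s.1.1 x) ≤ 1 / 2 ^ k) ∧
      (∀ y, dist (s'.1.1.symm y) (s.1.1.symm y) ≤ 1 / 2 ^ k) ∧
      (Even k → e₁ (k / 2) ∈ s'.1.2) ∧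
      (¬Even k → e₂ (k / 2) ∈ (s'.1.1 : E → E) '' s'.1.2))
    ⟨(Homeomorph.refl E, ∅), good₀⟩
    (fun k s => step_combined hGopen hD₁sub hD₂sub hD₁dense hD₂dense e₁ e₂ he₁ he₂ k s)
  set Hs : ℕ → E ≃ₜ E := fun k => (f k).1.1 with hHs
  set As : ℕ → Set E := fun k => (f k).1.2 with hAs
  have good : ∀ k, Good G D₁ D₂ (Hs k) (As k) := fun k => (f k).2
  have hmono : ∀ k m, k ≤ m → As k ⊆ As m := by
    intro k m hkm
    induction m, hkm using Nat.le_induction with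
    | base => exact subset_rfl
    | succ m hm ih => exact ih.trans (hfP m).1
  have hagree : ∀ k m, k ≤ m → ∀ x ∈ As k, Hs m x = Hs k x := by
    intro k m hkm
    induction m, hkm using Nat.le_induction with
    | base => intro x _; rfl
    | succ m hm ih =>
      intro x hx
      rw [(hfP m).2.1 x (hmono k m hm hx), ih x hx]
  -- Cauchy and limits for the forward maps
  have hdist : ∀ k x, dist (Hs k x) (Hs (k+1) x) ≤ (2:ℝ) / 2 / 2 ^ k := by
    intro k x
    rw [dist_comm]
    calc dist (Hs (k+1) x) (Hs k x) ≤ 1 / 2 ^ k := (hfP k).2.2.1 x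
      _ = (2:ℝ) / 2 / 2 ^ k := by norm_num
  have hcauchy : ∀ x, CauchySeq (fun k => Hs k x) :=
    fun x => cauchySeq_of_le_geometric_two (fun k => hdist k x)
  choose Hl hHl using fun x => cauchySeq_tendsto_of_complete (hcauchy x)
  have hHlb : ∀ k x, dist (Hs k x) (Hl x) ≤ 2 / 2 ^ k :=
    fun k x => dist_le_of_le_geometric_two_of_tendsto (fun m => hdist m x) (hHl x) k
  -- Cauchy and limits for the inverse maps
  have hdistK : ∀ k y, dist ((Hs k).symm y) ((Hs (k+1)).symm y) ≤ (2:ℝ) / 2 / 2 ^ k := by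
    intro k y
    rw [dist_comm]
    calc dist ((Hs (k+1)).symm y) ((Hs k).symm y) ≤ 1 / 2 ^ k := (hfP k).2.2.2.1 y
      _ = (2:ℝ) / 2 / 2 ^ k := by norm_num
  have hcauchyK : ∀ y, CauchySeq (fun k => (Hs k).symm y) :=
    fun y => cauchySeq_of_le_geometric_two (fun k => hdistK k y)
  choose Kl hKl using fun y => cauchySeq_tendsto_of_complete (hcauchyK y)
  have hKlb : ∀ k y, dist ((Hs k).symm y) (Kl y) ≤ 2 / 2 ^ k :=
    fun k y => dist_le_of_le_geometric_two_of_tendsto (fun m => hdistK m y) (hKl y) k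
  -- geometric bound tends to zero
  have hgeo : Filter.Tendsto (fun k : ℕ => (2:ℝ) / 2 ^ k) Filter.atTop (nhds 0) := by
    have h1 : Filter.Tendsto (fun k : ℕ => ((1:ℝ)/2) ^ k) Filter.atTop (nhds 0) :=
      tendsto_pow_atTop_nhds_zero_of_lt_one (by norm_num) (by norm_num)
    have : (fun k : ℕ => (2:ℝ) / 2 ^ k) = fun k => 2 * ((1:ℝ)/2) ^ k := by
      funext k
      rw [div_pow, one_pow]
      ring
    rw [this]
    simpa using h1.const_mul 2
  -- uniform convergence ⇒ continuity
  have htu : TendstoUniformly (fun k x => Hs k x) Hl Filter.atTop := by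
    rw [Metric.tendstoUniformly_iff]
    intro ε hε
    filter_upwards [hgeo.eventually (eventually_lt_nhds hε)] with k hk x
    calc dist (Hl x) (Hs k x) = dist (Hs k x) (Hl x) := dist_comm _ _
      _ ≤ 2 / 2 ^ k := hHlb k x
      _ < ε := hk
  have htuK : TendstoUniformly (fun k y => (Hs k).symm y) Kl Filter.atTop := by
    rw [Metric.tendstoUniformly_iff]
    intro ε hε
    filter_upwards [hgeo.eventually (eventually_lt_nhds hε)] with k hk y
    calc dist (Kl y) ((Hs k).symm y) = dist ((Hs k).symm y) (Kl y) := dist_comm _ _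
      _ ≤ 2 / 2 ^ k := hKlb k y
      _ < ε := hk
  have contH : Continuous Hl :=
    htu.continuous (Filter.Eventually.of_forall (f := Filter.atTop) fun k => (Hs k).continuous).frequently
  have contK : Continuous Kl :=
    htuK.continuous (Filter.Eventually.of_forall (f := Filter.atTop) fun k => (Hs k).symm.continuous).frequently
  -- inverse identities
  have leftinv : ∀ x, Kl (Hl x) = x := by
    intro x
    have hA : Filter.Tendsto (fun k => Kl (Hs k x)) Filter.atTop (nhds (Kl (Hl x))) :=
      (contK.tendsto _).comp (hHl x)
    have hB : Filter.Tendsto (fun k => dist (Kl (Hs k x)) ((Hs k).symm (Hs k x)))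
        Filter.atTop (nhds 0) := by
      apply squeeze_zero (fun _ => dist_nonneg) (fun k => ?_) hgeo
      rw [dist_comm]
      exact hKlb k (Hs k x)
    have hC : Filter.Tendsto (fun k => (Hs k).symm (Hs k x)) Filter.atTop (nhds (Kl (Hl x))) :=
      hA.congr_dist hB
    have hD : Filter.Tendsto (fun _ : ℕ => x) Filter.atTop (nhds (Kl (Hl x))) := by
      apply hC.congr
      intro k
      exact (Hs k).symm_apply_apply x
    exact tendsto_nhds_unique hD tendsto_const_nhds
  have rightinv : ∀ y, Hl (Kl y) = y := by
    intro y
    have hA : Filter.Tendsto (fun k => Hl ((Hs k).symm y)) Filter.atTop (nhds (Hl (Kl y))) :=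
      (contH.tendsto _).comp (hKl y)
    have hB : Filter.Tendsto (fun k => dist (Hl ((Hs k).symm y)) (Hs k ((Hs k).symm y)))
        Filter.atTop (nhds 0) := by
      apply squeeze_zero (fun _ => dist_nonneg) (fun k => ?_) hgeo
      rw [dist_comm]
      exact hHlb k ((Hs k).symm y)
    have hC : Filter.Tendsto (fun k => Hs k ((Hs k).symm y)) Filter.atTop (nhds (Hl (Kl y))) :=
      hA.congr_dist hB
    have hD : Filter.Tendsto (fun _ : ℕ => y) Filter.atTop (nhds (Hl (Kl y))) := by
      apply hC.congr
      intro k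
      exact (Hs k).apply_symm_apply y
    exact tendsto_nhds_unique hD tendsto_const_nhds
  set hom : E ≃ₜ E :=
    { toFun := Hl, invFun := Kl, left_inv := leftinv, right_inv := rightinv,
      continuous_toFun := contH, continuous_invFun := contK } with hhom
  have hhomcoe : (hom : E → E) = Hl := rfl
  -- value on eventually-fixed points
  have hlimA : ∀ k x, x ∈ As k → Hl x = Hs k x := by
    intro k x hx
    have hev : ∀ m, k ≤ m → Hs m x = Hs k x := fun m hm => hagree k m hm x hx
    have hD : Filter.Tendsto (fun m => Hs m x) Filter.atTop (nhds (Hs k x)) := by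
      apply Filter.Tendsto.congr' _ (tendsto_const_nhds (x := Hs k x))
      filter_upwards [Filter.eventually_ge_atTop k] with m hm
      exact (hev m hm).symm
    exact tendsto_nhds_unique (hHl x) hD
  refine ⟨hom, ?_, ?_⟩
  · rw [hhomcoe]
    apply Subset.antisymm
    · rintro y ⟨d, hd, rfl⟩
      rw [he₁r, mem_range] at hd
      obtain ⟨i, rfl⟩ := hd
      have heven : Even (2 * i) := even_two_mul i
      have hdiv : (2 * i) / 2 = i := by omega
      have hmem : e₁ i ∈ As (2 * i + 1) := by
        have := ((hfP (2 * i)).2.2.2.2.1) heven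
        rwa [hdiv] at this
      rw [hlimA (2 * i + 1) _ hmem]
      exact (good (2 * i + 1)).2.2.1 ⟨e₁ i, hmem, rfl⟩
    · intro q hq
      rw [he₂r, mem_range] at hq
      obtain ⟨i, rfl⟩ := hq
      have hodd : ¬ Even (2 * i + 1) := by simp [Nat.even_add_one]
      have hdiv : (2 * i + 1) / 2 = i := by omega
      have hmem : e₂ i ∈ (Hs (2 * i + 2) : E → E) '' As (2 * i + 2) := by
        have := ((hfP (2 * i + 1)).2.2.2.2.2) hodd
        rwa [hdiv] at this
      obtain ⟨p, hpA, hpq⟩ := hmem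
      refine ⟨p, (good (2 * i + 2)).2.1 hpA, ?_⟩
      rw [hlimA (2 * i + 2) p hpA, hpq]
  · intro x hx
    rw [hhomcoe]
    have hfix : ∀ k, Hs k x = x := fun k => (good k).1 x hx
    have hD : Filter.Tendsto (fun k => Hs k x) Filter.atTop (nhds x) := by
      apply Filter.Tendsto.congr _ (tendsto_const_nhds (x := x))
      intro k
      exact (hfix k).symm
    exact tendsto_nhds_unique (hHl x) hD


theorem stmt_9 (n : ℕ) (G : Set (EuclideanSpace ℝ (Fin n)))
    (hGopen : IsOpen G) (hGne : G.Nonempty)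
    (D₁ D₂ : Set (EuclideanSpace ℝ (Fin n)))
    (hD₁ctble : D₁.Countable) (hD₂ctble : D₂.Countable)
    (hD₁sub : D₁ ⊆ G) (hD₂sub : D₂ ⊆ G)
    (hD₁dense : G ⊆ closure D₁) (hD₂dense : G ⊆ closure D₂) :
    ∃ h : EuclideanSpace ℝ (Fin n) ≃ₜ EuclideanSpace ℝ (Fin n),
      ⇑h '' D₁ = D₂ ∧ ∀ x ∉ G, h x = x := by
  rcases subsingleton_or_nontrivial (EuclideanSpace ℝ (Fin n)) with hsub | hnt
  · -- subsingleton case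
    obtain ⟨x₀, hx₀⟩ := hGne
    have hD₁ne : D₁.Nonempty := by
      by_contra hne
      rw [not_nonempty_iff_eq_empty] at hne
      have := hD₁dense hx₀
      rw [hne, closure_empty] at this
      exact this
    have hD₂ne : D₂.Nonempty := by
      by_contra hne
      rw [not_nonempty_iff_eq_empty] at hne
      have := hD₂dense hx₀
      rw [hne, closure_empty] at this
      exact this
    obtain ⟨d₁, hd₁⟩ := hD₁ne
    obtain ⟨d₂, hd₂⟩ := hD₂ne
    have hDeq : D₁ = D₂ := by
      ext x
      constructor
      · intro _; rwa [Subsingleton.elim x d₂]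
      · intro _; rwa [Subsingleton.elim x d₁]
    exact ⟨Homeomorph.refl _, by simp [hDeq], fun x _ => rfl⟩
  · obtain ⟨h, h1, h2⟩ := main_nontrivial hGopen hGne hD₁ctble hD₂ctble hD₁sub hD₂sub
      hD₁dense hD₂dense
    exact ⟨h, h1, h2⟩
end

section
/- Let P be a connected topological space and let A ⊆ P be an open set whose frontier (in P) is connected. Then P \ A is connected. -/
open Set

theorem stmt_18 {P : Type*} [TopologicalSpace P] [ConnectedSpace P]
    (A : Set P) (hA : IsOpen A) (hfr : IsConnected (frontier A)) :
    IsConnected Aᶜ := by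
  have hfrc : frontier A ⊆ Aᶜ := by
    rw [hA.frontier_eq]; exact fun x hx => hx.2
  have hkey : ∀ u v : Set P, IsClosed u → IsClosed v → Aᶜ ⊆ u ∪ v → Disjoint u v →
      frontier A ⊆ u → Aᶜ ⊆ u := by
    intro u v hu hv hsub hdisj hfu
    have hcl : IsClosed (A ∪ u) := by
      apply isClosed_of_closure_subset
      calc closure (A ∪ u) = closure A ∪ closure u := closure_union
        _ ⊆ (A ∪ frontier A) ∪ u := by
            rw [hu.closure_eq]
            apply union_subset_union_left
            rw [closure_eq_self_union_frontier]
        _ ⊆ A ∪ u := by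
            apply union_subset _ subset_union_right
            exact union_subset subset_union_left (hfu.trans subset_union_right)
    have hcompl : (A ∪ u)ᶜ = v ∩ Aᶜ := by
      ext x
      simp only [mem_compl_iff, mem_union, mem_inter_iff, not_or]
      constructor
      · rintro ⟨hxA, hxu⟩
        rcases hsub hxA with h | h
        · exact absurd h hxu
        · exact ⟨h, hxA⟩
      · rintro ⟨hxv, hxA⟩
        exact ⟨hxA, fun hxu => hdisj.ne_of_mem hxu hxv rfl⟩
    have hopen : IsOpen (A ∪ u) := by
      rw [← isClosed_compl_iff, hcompl]
      exact hv.inter (isClosed_compl_iff.mpr hA)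
    have hclopen : IsClopen (A ∪ u) := ⟨hcl, hopen⟩
    have hne : (A ∪ u).Nonempty := hfr.nonempty.mono (hfu.trans subset_union_right)
    have huniv : A ∪ u = univ := by
      rcases isClopen_iff.mp hclopen with h | h
      · exact absurd (h ▸ hne) (by simp)
      · exact h
    intro x hx
    rcases (huniv ▸ mem_univ x : x ∈ A ∪ u) with h | h
    · exact absurd h hx
    · exact h
  constructor
  · exact hfr.nonempty.mono hfrc
  · rw [isPreconnected_iff_subset_of_fully_disjoint_closed (isClosed_compl_iff.mpr hA)]
    intro u v hu hv hsub hdisj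
    rcases (isPreconnected_iff_subset_of_fully_disjoint_closed isClosed_frontier).mp
        hfr.isPreconnected u v hu hv (hfrc.trans hsub) hdisj with h | h
    · exact Or.inl (hkey u v hu hv hsub hdisj h)
    · exact Or.inr (hkey v u hv hu (by rwa [union_comm]) hdisj.symm h)
end

section
/- Let X be a compact metric space, let Y ⊆ X be a subset which, as a subspace, is a locally connected continuum, and let 𝒜 be a family of subsets of X such that: every A ∈ 𝒜 intersects Y; every A ∈ 𝒜 is, as a subspace, a locally connected continuum; for every ε > 0 the set {A ∈ 𝒜 : diam(A) ≥ ε} is finite; and Y ∪ ⋃𝒜 = X. Then X is a locally connected continuum. -/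
open Set

private lemma attach_preconn {X : Type*} [TopologicalSpace X] {s : Set X}
    (hs : IsPreconnected s) (hsne : s.Nonempty) (T : Set (Set X))
    (hT : ∀ t ∈ T, IsPreconnected t ∧ (t ∩ s).Nonempty) :
    IsPreconnected (s ∪ ⋃₀ T) := by
  obtain ⟨c, hc⟩ := hsne
  have key := isPreconnected_sUnion c (insert s ((fun t => s ∪ t) '' T)) ?_ ?_
  · have : ⋃₀ (insert s ((fun t => s ∪ t) '' T)) = s ∪ ⋃₀ T := by
      ext z
      simp only [sUnion_insert, mem_union, mem_sUnion, mem_image]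
      constructor
      · rintro (hz | ⟨u, ⟨t, ht, rfl⟩, hzu⟩)
        · exact Or.inl hz
        · rcases hzu with hz | hz
          · exact Or.inl hz
          · exact Or.inr ⟨t, ht, hz⟩
      · rintro (hz | ⟨t, ht, hz⟩)
        · exact Or.inl hz
        · exact Or.inr ⟨s ∪ t, ⟨t, ht, rfl⟩, Or.inr hz⟩
    rwa [this] at key
  · rintro u (rfl | ⟨t, ht, rfl⟩)
    · exact hc
    · exact Or.inl hc
  · rintro u (rfl | ⟨t, ht, rfl⟩)
    · exact hs
    · obtain ⟨q, hqt, hqs⟩ := (hT t ht).2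
      exact IsPreconnected.union q hqs hqt hs (hT t ht).1

/-- Property S for a compact locally connected subset. -/
private lemma propS {X : Type*} [MetricSpace X] (K : Set X) (hK : IsCompact K)
    (hlc : LocallyConnectedSpace ↥K) {ε : ℝ} (hε : 0 < ε) :
    ∃ 𝒞 : Set (Set X), 𝒞.Finite ∧
      (∀ C ∈ 𝒞, C.Nonempty ∧ IsPreconnected C ∧ Metric.diam C ≤ ε ∧ C ⊆ K) ∧
      K ⊆ ⋃₀ 𝒞 := by
  have : CompactSpace ↥K := isCompact_iff_compactSpace.mp hK
  have hhalf : (0:ℝ) < ε / 2 := by linarith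
  have hnb : ∀ y : ↥K, (Subtype.val ⁻¹' Metric.ball (y : X) (ε/2)) ∈ nhds y :=
    fun y => continuous_subtype_val.continuousAt.preimage_mem_nhds
      (Metric.ball_mem_nhds _ hhalf)
  have hex : ∀ y : ↥K, ∃ V ⊆ (Subtype.val ⁻¹' Metric.ball (y : X) (ε/2)),
      IsOpen V ∧ y ∈ V ∧ IsConnected V :=
    fun y => locallyConnectedSpace_iff_subsets_isOpen_isConnected.mp hlc y _ (hnb y)
  choose V hVsub hVopen hVmem hVconn using hex
  obtain ⟨t, ht⟩ := isCompact_univ.elim_finite_subcover V hVopen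
    (fun z _ => mem_iUnion.2 ⟨z, hVmem z⟩)
  refine ⟨(fun y => Subtype.val '' V y) '' ↑t, (t.finite_toSet).image _, ?_, ?_⟩
  · rintro C ⟨y, hy, rfl⟩
    refine ⟨⟨y, y, hVmem y, rfl⟩, (hVconn y).isPreconnected.image _
      continuous_subtype_val.continuousOn, ?_, ?_⟩
    · have hsub : Subtype.val '' V y ⊆ Metric.ball (y : X) (ε/2) := by
        rintro _ ⟨z, hz, rfl⟩; exact hVsub y hz
      calc Metric.diam (Subtype.val '' V y)
          ≤ Metric.diam (Metric.ball (y : X) (ε/2)) :=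
            Metric.diam_mono hsub Metric.isBounded_ball
        _ ≤ 2 * (ε/2) := Metric.diam_ball (le_of_lt hhalf)
        _ = ε := by ring
    · rintro _ ⟨z, _, rfl⟩; exact z.2
  · intro k hk
    have : (⟨k, hk⟩ : ↥K) ∈ ⋃ y ∈ t, V y := ht (mem_univ _)
    obtain ⟨y, hyt, hyV⟩ := mem_iUnion₂.mp this
    exact ⟨Subtype.val '' V y, ⟨y, hyt, rfl⟩, ⟨⟨k, hk⟩, hyV, rfl⟩⟩

/-- Property S implies local connectedness, for a compact metric space. -/
private lemma lc_of_S {X : Type*} [MetricSpace X] [CompactSpace X]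
    (hS : ∀ ε : ℝ, 0 < ε → ∃ 𝒞 : Set (Set X), 𝒞.Finite ∧
      (∀ C ∈ 𝒞, IsPreconnected C ∧ Metric.diam C ≤ ε) ∧ ⋃₀ 𝒞 = univ) :
    LocallyConnectedSpace X := by
  have hbdd : ∀ s : Set X, Bornology.IsBounded s :=
    fun s => isCompact_univ.isBounded.subset (subset_univ s)
  rw [locallyConnectedSpace_iff_connected_subsets]
  intro x U hU
  obtain ⟨ε, hε, hball⟩ := Metric.nhds_basis_closedBall.mem_iff.mp hU
  obtain ⟨𝒞, h𝒞fin, h𝒞p, h𝒞cov⟩ := hS ε hε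
  set G : Set (Set X) := {F ∈ 𝒞 | x ∈ closure F} with hG
  set V : Set X := {x} ∪ ⋃₀ G with hV
  have hVsub : V ⊆ Metric.closedBall x ε := by
    rintro p (rfl | ⟨F, hF, hpF⟩)
    · exact Metric.mem_closedBall_self (le_of_lt hε)
    · have hpc : p ∈ closure F := subset_closure hpF
      have : dist p x ≤ Metric.diam (closure F) :=
        Metric.dist_le_diam_of_mem (hbdd _) hpc hF.2
      rw [Metric.diam_closure] at this
      exact Metric.mem_closedBall.mpr (this.trans (h𝒞p F hF.1).2)
  refine ⟨V, ?_, ?_, hVsub.trans hball⟩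
  · -- V is a neighborhood of x
    set Bad : Set (Set X) := {F ∈ 𝒞 | x ∉ closure F} with hBad
    have hBadfin : Bad.Finite := h𝒞fin.subset (fun F hF => hF.1)
    set W : Set X := ⋂ F ∈ Bad, (closure F)ᶜ with hW
    have hWopen : IsOpen W :=
      hBadfin.isOpen_biInter (fun F _ => isClosed_closure.isOpen_compl)
    have hxW : x ∈ W := by
      simp only [hW, mem_iInter, mem_compl_iff]
      exact fun F hF => hF.2
    have hWV : W ⊆ V := by
      intro w hw
      have : w ∈ ⋃₀ 𝒞 := h𝒞cov ▸ mem_univ w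
      obtain ⟨F, hF, hwF⟩ := this
      by_cases hx : x ∈ closure F
      · exact Or.inr ⟨F, ⟨hF, hx⟩, hwF⟩
      · exfalso
        have : w ∈ (closure F)ᶜ := by
          simp only [hW, mem_iInter] at hw
          exact hw F ⟨hF, hx⟩
        exact this (subset_closure hwF)
    exact Filter.mem_of_superset (hWopen.mem_nhds hxW) hWV
  · -- V is preconnected
    have key := isPreconnected_sUnion x (insert {x} ((insert x ·) '' G)) ?_ ?_
    · have : ⋃₀ (insert {x} ((insert x ·) '' G)) = V := by
        ext z
        simp only [sUnion_insert, hV, mem_union, mem_sUnion, mem_singleton_iff, mem_image]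
        constructor
        · rintro (rfl | ⟨u, ⟨F, hF, rfl⟩, hzu⟩)
          · exact Or.inl rfl
          · rcases hzu with rfl | hz
            · exact Or.inl rfl
            · exact Or.inr ⟨F, hF, hz⟩
        · rintro (rfl | ⟨F, hF, hz⟩)
          · exact Or.inl rfl
          · exact Or.inr ⟨insert x F, ⟨F, hF, rfl⟩, Or.inr hz⟩
      rwa [this] at key
    · rintro u (rfl | ⟨F, hF, rfl⟩)
      · exact rfl
      · exact mem_insert x F
    · rintro u (rfl | ⟨F, hF, rfl⟩)
      · exact isPreconnected_singleton
      · exact (h𝒞p F hF.1).1.subset_closure (subset_insert x F)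
          (insert_subset hF.2 subset_closure)

theorem stmt_19 {X : Type*} [MetricSpace X] [CompactSpace X]
    (Y : Set X) (hYc : IsCompact Y) (hYconn : IsConnected Y)
    (hYlc : LocallyConnectedSpace ↥Y)
    (𝒜 : Set (Set X))
    (hmeet : ∀ A ∈ 𝒜, (A ∩ Y).Nonempty)
    (hlcc : ∀ A ∈ 𝒜, IsCompact A ∧ IsConnected A ∧ LocallyConnectedSpace ↥A)
    (hfin : ∀ ε : ℝ, 0 < ε → {A ∈ 𝒜 | ε ≤ Metric.diam A}.Finite)
    (hcover : Y ∪ ⋃₀ 𝒜 = univ) :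
    ConnectedSpace X ∧ LocallyConnectedSpace X := by
  have hbdd : ∀ s : Set X, Bornology.IsBounded s :=
    fun s => isCompact_univ.isBounded.subset (subset_univ s)
  obtain ⟨y0, hy0⟩ := hYconn.nonempty
  have hpre : IsPreconnected (univ : Set X) := by
    rw [← hcover]
    exact attach_preconn hYconn.isPreconnected ⟨y0, hy0⟩ 𝒜
      (fun A hA => ⟨(hlcc A hA).2.1.isPreconnected, hmeet A hA⟩)
  refine ⟨{ isPreconnected_univ := hpre, toNonempty := ⟨y0⟩ }, ?_⟩
  apply lc_of_S
  intro ε hε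
  set ε' : ℝ := ε / 4 with hε'def
  have hε' : 0 < ε' := by simp only [hε'def]; linarith
  have hε'ε : ε' ≤ ε := by simp only [hε'def]; linarith
  set ℬ : Set (Set X) := {A ∈ 𝒜 | ε' ≤ Metric.diam A} with hℬdef
  have hℬfin : ℬ.Finite := hfin ε' hε'
  obtain ⟨𝒞, h𝒞fin, h𝒞p, h𝒞cov⟩ := propS Y hYc hYlc hε'
  have hD : ∀ A ∈ ℬ, ∃ D : Set (Set X), D.Finite ∧
      (∀ C ∈ D, C.Nonempty ∧ IsPreconnected C ∧ Metric.diam C ≤ ε' ∧ C ⊆ A) ∧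
      A ⊆ ⋃₀ D :=
    fun A hA => propS A (hlcc A hA.1).1 (hlcc A hA.1).2.2 hε'
  choose! D hDfin hDp hDcov using hD
  set enlarge : Set X → Set X :=
    fun C => C ∪ ⋃₀ {A | A ∈ 𝒜 ∧ Metric.diam A < ε' ∧ (A ∩ C).Nonempty} with henl
  refine ⟨(enlarge '' 𝒞) ∪ ⋃ A ∈ ℬ, D A, ?_, ?_, ?_⟩
  · exact (h𝒞fin.image _).union (hℬfin.biUnion (fun A hA => hDfin A hA))
  · rintro F (⟨C, hC, rfl⟩ | hF)
    · obtain ⟨hCne, hCpre, hCdiam, hCY⟩ := h𝒞p C hC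
      constructor
      · exact attach_preconn hCpre hCne _
          (fun A hA => ⟨(hlcc A hA.1).2.1.isPreconnected, hA.2.2⟩)
      · obtain ⟨c, hc⟩ := hCne
        have hsub : enlarge C ⊆ Metric.closedBall c (2 * ε') := by
          rintro p (hp | ⟨A, ⟨hA𝒜, hAd, hAC⟩, hpA⟩)
          · have : dist p c ≤ Metric.diam C :=
              Metric.dist_le_diam_of_mem (hbdd _) hp hc
            exact Metric.mem_closedBall.mpr (by linarith)
          · obtain ⟨q, hqA, hqC⟩ := hAC
            have h1 : dist p q ≤ Metric.diam A :=
              Metric.dist_le_diam_of_mem (hbdd _) hpA hqA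
            have h2 : dist q c ≤ Metric.diam C :=
              Metric.dist_le_diam_of_mem (hbdd _) hqC hc
            have := dist_triangle p q c
            exact Metric.mem_closedBall.mpr (by linarith)
        calc Metric.diam (enlarge C)
            ≤ Metric.diam (Metric.closedBall c (2 * ε')) :=
              Metric.diam_mono hsub Metric.isBounded_closedBall
          _ ≤ 2 * (2 * ε') := Metric.diam_closedBall (by linarith)
          _ ≤ ε := by simp only [hε'def]; linarith
    · obtain ⟨A, hAmem⟩ := mem_iUnion.mp hF
      obtain ⟨hAℬ, hFD⟩ := mem_iUnion.mp hAmem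
      obtain ⟨_, hFpre, hFdiam, _⟩ := hDp A hAℬ F hFD
      exact ⟨hFpre, hFdiam.trans hε'ε⟩
  · apply eq_univ_of_forall
    intro x
    have hx : x ∈ Y ∪ ⋃₀ 𝒜 := hcover ▸ mem_univ x
    rcases hx with hxY | ⟨A, hA𝒜, hxA⟩
    · obtain ⟨C, hC, hxC⟩ := h𝒞cov hxY
      exact ⟨enlarge C, Or.inl ⟨C, hC, rfl⟩, Or.inl hxC⟩
    · by_cases hbig : ε' ≤ Metric.diam A
      · have hAℬ : A ∈ ℬ := ⟨hA𝒜, hbig⟩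
        obtain ⟨F, hFD, hxF⟩ := hDcov A hAℬ hxA
        exact ⟨F, Or.inr (mem_iUnion₂.mpr ⟨A, hAℬ, hFD⟩), hxF⟩
      · push_neg at hbig
        obtain ⟨q, hqA, hqY⟩ := hmeet A hA𝒜
        obtain ⟨C, hC, hqC⟩ := h𝒞cov hqY
        refine ⟨enlarge C, Or.inl ⟨C, hC, rfl⟩,
          Or.inr ⟨A, ⟨hA𝒜, hbig, ⟨q, hqA, hqC⟩⟩, hxA⟩⟩
end
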